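/- Let w ∈ S_n be a minimal crowded permutation, with first (smallest) descent d and last (largest) descent d'. Then w(i) = i for all i ∈ [1, d−1] ∪ [d'+2, n]. -/

import Mathlib

/-- The value in position `j` (0-indexed) of the one-line notation of `w`,
extended by the identity outside the range `[0, n)`. -/
def entry {n : ℕ} (w : Equiv.Perm (Fin n)) (j : ℕ) : ℕ :=
  if h : j < n then (w ⟨j, h⟩ : ℕ) else j

/-- One-line notation of a permutation, as a list of natural numbers (0-indexed values). -/
def oneLine {n : ℕ} (w : Equiv.Perm (Fin n)) : List ℕ :=
  List.ofFn (fun i => (w i : ℕ))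

/-- A permutation is fully commutative iff it avoids the pattern 321. -/
def FullyCommutative {n : ℕ} (w : Equiv.Perm (Fin n)) : Prop :=
  ¬ ∃ i j k : Fin n, i < j ∧ j < k ∧ w k < w j ∧ w j < w i

/-- A permutation is boolean iff it avoids the patterns 321 and 3412. -/
def BooleanPerm {n : ℕ} (w : Equiv.Perm (Fin n)) : Prop :=
  FullyCommutative w ∧
    ¬ ∃ i j k l : Fin n, i < j ∧ j < k ∧ k < l ∧
        w k < w l ∧ w l < w i ∧ w i < w j

/-- The Coxeter length of a permutation: its number of inversions. -/
def invCount {n : ℕ} (w : Equiv.Perm (Fin n)) : ℕ :=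
  (Finset.univ.filter fun p : Fin n × Fin n => p.1 < p.2 ∧ w p.2 < w p.1).card

/-- The support of `w`: the set of (0-indexed) indices `i` such that the simple
transposition `s_i` appears in some (equivalently, every) reduced word of `w`;
equivalently, `{w(0),…,w(i)} ≠ {0,…,i}`, i.e. `max {w(j) : j ≤ i} > i`. -/
def Supp {n : ℕ} (w : Equiv.Perm (Fin n)) : Set ℕ :=
  {i | ∃ j : Fin n, (j : ℕ) ≤ i ∧ i < (w j : ℕ)}

/-- The simple transposition `s_i`, swapping positions `i` and `i+1` (0-indexed). -/
def simpleTr {n : ℕ} (i : ℕ) (h : i + 1 < n) : Equiv.Perm (Fin n) :=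
  Equiv.swap ⟨i, by omega⟩ ⟨i + 1, h⟩

/-- Schensted row insertion of a value into a tableau (a list of rows). -/
def rowInsert : List (List ℕ) → ℕ → List (List ℕ)
  | [], x => [[x]]
  | r :: rest, x =>
    match r.find? (fun y => decide (x < y)) with
    | none => (r ++ [x]) :: rest
    | some y => (r.map fun z => if z = y then x else z) :: rowInsert rest y

/-- RSK insertion tableau of a list. -/
def RSKList (l : List ℕ) : List (List ℕ) := l.foldl rowInsert []

/-- RSK insertion tableau `P(w)` of a permutation. -/
def RSKP {n : ℕ} (w : Equiv.Perm (Fin n)) : List (List ℕ) := RSKList (oneLine w)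

/-- RSK recording tableau `Q(w) = P(w⁻¹)`. -/
def RSKQ {n : ℕ} (w : Equiv.Perm (Fin n)) : List (List ℕ) := RSKP w⁻¹

/-- The set of entries in the first row of a tableau. -/
def Row1 (T : List (List ℕ)) : Finset ℕ := (T.getD 0 []).toFinset

/-- The set of entries in the second row of a tableau. -/
def Row2 (T : List (List ℕ)) : Finset ℕ := (T.getD 1 []).toFinset

/-- `BumpsAt l k z` : during the RSK insertion of the list `l`, the insertion of
the `(k+1)`-st letter of `l` bumps the value `z` from the first row to the
second row (`z` is the smallest first-row entry larger than the inserted letter). -/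
def BumpsAt (l : List ℕ) (k : ℕ) (z : ℕ) : Prop :=
  k < l.length ∧
    ((RSKList (l.take k)).getD 0 []).find? (fun y => decide (l.getD k 0 < y)) = some z

/-- `Bumps l b z` : during the RSK insertion of `l`, the value `b` bumps the
value `z` from the first row to the second row. -/
def Bumps (l : List ℕ) (b z : ℕ) : Prop :=
  ∃ k, l.getD k 0 = b ∧ BumpsAt l k z

/-- A finite set of naturals is crowded if some integer interval `[y, y+2x]`
(with `x > 0`) contains more than `x+1` of its elements. -/
def CrowdedSet (L : Finset ℕ) : Prop :=
  ∃ x y : ℤ, 0 < x ∧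
    x + 1 < ((L.filter fun a : ℕ => y ≤ (a : ℤ) ∧ (a : ℤ) ≤ y + 2 * x).card : ℤ)

/-- A fully commutative permutation is crowded if the second row of its RSK
insertion tableau is a crowded set. -/
def CrowdedPerm {n : ℕ} (w : Equiv.Perm (Fin n)) : Prop :=
  CrowdedSet (Row2 (RSKP w))

/-- Covering relation of the right weak order. -/
def RWCovers {n : ℕ} (u v : Equiv.Perm (Fin n)) : Prop :=
  ∃ i, ∃ h : i + 1 < n, v = u * simpleTr i h ∧ invCount v = invCount u + 1

/-- The right weak order on `S_n`. -/
def RightWeakLE {n : ℕ} : Equiv.Perm (Fin n) → Equiv.Perm (Fin n) → Prop :=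
  Relation.ReflTransGen RWCovers

/-- Covering relation of the left weak order. -/
def LWCovers {n : ℕ} (u v : Equiv.Perm (Fin n)) : Prop :=
  ∃ i, ∃ h : i + 1 < n, v = simpleTr i h * u ∧ invCount v = invCount u + 1

/-- The left weak order on `S_n`. -/
def LeftWeakLE {n : ℕ} : Equiv.Perm (Fin n) → Equiv.Perm (Fin n) → Prop :=
  Relation.ReflTransGen LWCovers

/-- A minimal crowded permutation: a crowded fully commutative permutation all of
whose strict predecessors (among fully commutative permutations) in the right
weak order are uncrowded. -/
def MinimalCrowded {n : ℕ} (w : Equiv.Perm (Fin n)) : Prop :=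
  FullyCommutative w ∧ CrowdedPerm w ∧
    ∀ v : Equiv.Perm (Fin n), FullyCommutative v → RightWeakLE v w → v ≠ w →
      ¬ CrowdedPerm v

/-- `l` is an increasing subsequence of the one-line notation of `w`. -/
def IncreasingSubseq {n : ℕ} (w : Equiv.Perm (Fin n)) (l : List ℕ) : Prop :=
  l.Sublist (oneLine w) ∧ l.Pairwise (· < ·)

/-- The length of a longest increasing subsequence of `w`. -/
noncomputable def lisLen {n : ℕ} (w : Equiv.Perm (Fin n)) : ℕ :=
  sSup {k | ∃ l : List ℕ, IncreasingSubseq w l ∧ l.length = k}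

/-- A consecutive occurrence of the pattern 415263 starting at (0-indexed) position `i`. -/
def Consec415263 {n : ℕ} (w : Equiv.Perm (Fin n)) (i : ℕ) : Prop :=
  i + 5 < n ∧
    entry w (i + 1) < entry w (i + 3) ∧ entry w (i + 3) < entry w (i + 5) ∧
    entry w (i + 5) < entry w i ∧ entry w i < entry w (i + 2) ∧
    entry w (i + 2) < entry w (i + 4)

/-- A consecutive occurrence of the pattern 315264 starting at (0-indexed) position `i`. -/
def Consec315264 {n : ℕ} (w : Equiv.Perm (Fin n)) (i : ℕ) : Prop :=
  i + 5 < n ∧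
    entry w (i + 1) < entry w (i + 3) ∧ entry w (i + 3) < entry w i ∧
    entry w i < entry w (i + 5) ∧ entry w (i + 5) < entry w (i + 2) ∧
    entry w (i + 2) < entry w (i + 4)

/-- An occurrence (not necessarily consecutive) of the pattern 415263 in `w`,
at positions `p 0 < p 1 < ⋯ < p 5`. -/
def Occ415263 {n : ℕ} (w : Equiv.Perm (Fin n)) (p : Fin 6 → Fin n) : Prop :=
  StrictMono p ∧
    w (p 1) < w (p 3) ∧ w (p 3) < w (p 5) ∧ w (p 5) < w (p 0) ∧
    w (p 0) < w (p 2) ∧ w (p 2) < w (p 4)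
section Aux

open List

lemma rskList_append (l : List ℕ) (x : ℕ) :
    RSKList (l ++ [x]) = rowInsert (RSKList l) x := by
  simp [RSKList, List.foldl_append]

lemma mem_row1_rowInsert (T : List (List ℕ)) (x : ℕ) :
    x ∈ (rowInsert T x).getD 0 [] := by
  cases T with
  | nil => simp [rowInsert]
  | cons r rest =>
    simp only [rowInsert]
    cases hf : r.find? (fun y => decide (x < y)) with
    | none => simp
    | some z =>
      have hz : z ∈ r := List.mem_of_find?_eq_some hf
      simp only [List.getD_cons_zero, List.mem_map]
      exact ⟨z, hz, by simp⟩

lemma row1_rowInsert_cases (T : List (List ℕ)) (x : ℕ) :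
    ∀ y ∈ (rowInsert T x).getD 0 [], y = x ∨ y ∈ T.getD 0 [] := by
  intro y hy
  cases T with
  | nil => simp [rowInsert] at hy; exact Or.inl hy
  | cons r rest =>
    simp only [rowInsert] at hy
    cases hf : r.find? (fun y => decide (x < y)) with
    | none =>
      rw [hf] at hy; simp at hy
      rcases hy with h | h
      · exact Or.inr (by simpa using h)
      · exact Or.inl h
    | some z =>
      rw [hf] at hy
      simp only [List.getD_cons_zero, List.mem_map] at hy
      obtain ⟨a, ha, rfl⟩ := hy
      by_cases hz : a = z
      · simp [hz]
      · simp [hz]; exact Or.inr (by simpa using ha)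

lemma row1_RSKList_subset (l : List ℕ) :
    ∀ y ∈ (RSKList l).getD 0 [], y ∈ l := by
  induction l using List.reverseRecOn with
  | nil => intro y hy; simp [RSKList] at hy
  | append_singleton l x IH =>
    intro y hy
    rw [rskList_append] at hy
    rcases row1_rowInsert_cases _ _ y hy with rfl | h
    · simp
    · simp [IH y h]

end Aux
section Swap
open List

lemma map_repl_eq (r : List ℕ) (W b : ℕ) (h : ∀ a ∈ r, a < W) :
    r.map (fun z' => if z' = W then b else z') = r := by
  conv_rhs => rw [← List.map_id r]
  exact List.map_congr_left (fun a ha => by rw [if_neg (by have := h a ha; omega), id])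

lemma swap_insert₁ (T : List (List ℕ)) (W b : ℕ)
    (hW : ∀ y ∈ T.getD 0 [], y < W)
    (hex : ∃ y ∈ T.getD 0 [], b < y) :
    rowInsert (rowInsert T W) b = rowInsert (rowInsert T b) W := by
  obtain ⟨y0, hy0, hby0⟩ := hex
  cases T with
  | nil => simp at hy0
  | cons r rest =>
    simp only [List.getD_cons_zero] at hW hy0
    have hWnone : r.find? (fun y => decide (W < y)) = none :=
      List.find?_eq_none.mpr (fun y hy => by
        simp only [decide_eq_true_eq]
        exact not_lt.mpr (le_of_lt (hW y hy)))
    have hbsome : (r.find? fun y => decide (b < y)).isSome :=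
      List.find?_isSome.mpr ⟨y0, hy0, by simpa using hby0⟩
    obtain ⟨z, hz⟩ := Option.isSome_iff_exists.mp hbsome
    have hzr : z ∈ r := List.mem_of_find?_eq_some hz
    have hbz : b < z := by simpa using List.find?_some hz
    have hzW : z < W := hW z hzr
    have happend : (r ++ [W]).find? (fun y => decide (b < y)) = some z := by
      rw [List.find?_append, hz]; rfl
    have hmapnone : ((r.map fun z' => if z' = z then b else z').find?
        (fun y => decide (W < y))) = none := by
      refine List.find?_eq_none.mpr ?_
      intro y hy
      simp only [List.mem_map] at hy
      obtain ⟨a, ha, rfl⟩ := hy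
      by_cases haz : a = z
      · simp [haz, not_lt.mpr (le_of_lt (lt_trans hbz hzW))]
      · simp [haz, not_lt.mpr (le_of_lt (hW a ha))]
    have e1 : rowInsert (r :: rest) W = (r ++ [W]) :: rest := by
      simp only [rowInsert, hWnone]
    have e2 : rowInsert ((r ++ [W]) :: rest) b =
        ((r ++ [W]).map fun z' => if z' = z then b else z') :: rowInsert rest z := by
      simp only [rowInsert, happend]
    have e3 : rowInsert (r :: rest) b =
        (r.map fun z' => if z' = z then b else z') :: rowInsert rest z := by
      simp only [rowInsert, hz]
    have e4 : rowInsert ((r.map fun z' => if z' = z then b else z') :: rowInsert rest z) W =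
        ((r.map fun z' => if z' = z then b else z') ++ [W]) :: rowInsert rest z := by
      simp only [rowInsert, hmapnone]
    rw [e1, e2, e3, e4]
    congr 1
    rw [List.map_append]
    congr 1
    simp only [List.map_cons, List.map_nil]
    congr 1
    rw [if_neg (by omega)]

lemma swap_insert₂ (T : List (List ℕ)) (W b x : ℕ)
    (hW : ∀ y ∈ T.getD 0 [], y < W)
    (hall : ∀ y ∈ T.getD 0 [], y < b)
    (hbx : b < x) (hxW : x < W) :
    rowInsert (rowInsert (rowInsert T W) b) x
      = rowInsert (rowInsert (rowInsert T b) W) x := by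
  have hbW : b < W := lt_trans hbx hxW
  cases T with
  | nil =>
    have e1 : ([W] : List ℕ).find? (fun y => decide (b < y)) = some W :=
      List.find?_cons_of_pos (l := _) (by simpa using hbW)
    have e2 : ([b] : List ℕ).find? (fun y => decide (x < y)) = none := by
      rw [List.find?_cons_of_neg (l := _) (by simp; omega), List.find?_nil]
    have e3 : ([b] : List ℕ).find? (fun y => decide (W < y)) = none := by
      rw [List.find?_cons_of_neg (l := _) (by simp; omega), List.find?_nil]
    have e4 : ([b, W] : List ℕ).find? (fun y => decide (x < y)) = some W := by
      rw [List.find?_cons_of_neg (l := _) (by simp; omega), List.find?_cons_of_pos (l := _) (by simpa using hxW)]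
    have h1 : rowInsert ([] : List (List ℕ)) W = [[W]] := rfl
    have h2 : rowInsert ([] : List (List ℕ)) b = [[b]] := rfl
    have s1 : rowInsert [[W]] b = [[b], [W]] := by
      simp only [rowInsert, e1]
      norm_num
    have s2 : rowInsert [[b], [W]] x = [[b, x], [W]] := by
      simp only [rowInsert, e2]
      rfl
    have s3 : rowInsert [[b]] W = [[b, W]] := by
      simp only [rowInsert, e3]
      rfl
    have s4 : rowInsert [[b, W]] x = [[b, x], [W]] := by
      simp only [rowInsert, e4]
      rw [show ([b, W].map fun z' => if z' = W then x else z') = [b, x] by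
        simp [if_neg (by omega : ¬ b = W)]]
    rw [h1, h2, s1, s2, s3, s4]
  | cons r rest =>
    simp only [List.getD_cons_zero] at hW hall
    have hrb : r.find? (fun y => decide (b < y)) = none :=
      List.find?_eq_none.mpr (fun y hy => by simpa using not_lt.mpr (le_of_lt (hall y hy)))
    have hrW : r.find? (fun y => decide (W < y)) = none :=
      List.find?_eq_none.mpr (fun y hy => by simpa using not_lt.mpr (le_of_lt (hW y hy)))
    have hrx : r.find? (fun y => decide (x < y)) = none :=
      List.find?_eq_none.mpr (fun y hy => by
        simpa using not_lt.mpr (le_of_lt (lt_trans (hall y hy) hbx)))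
    have e1 : (r ++ [W]).find? (fun y => decide (b < y)) = some W := by
      rw [List.find?_append, hrb, List.find?_cons_of_pos (l := _) (by simpa using hbW)]
      rfl
    have e2 : (r ++ [b]).find? (fun y => decide (W < y)) = none := by
      rw [List.find?_append, hrW, List.find?_cons_of_neg (l := _) (by simp; omega), List.find?_nil]
      rfl
    have e3 : (r ++ [b]).find? (fun y => decide (x < y)) = none := by
      rw [List.find?_append, hrx, List.find?_cons_of_neg (l := _) (by simp; omega), List.find?_nil]
      rfl
    have e4 : (r ++ [b, W]).find? (fun y => decide (x < y)) = some W := by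
      rw [List.find?_append, hrx, List.find?_cons_of_neg (l := _) (by simp; omega),
        List.find?_cons_of_pos (l := _) (by simpa using hxW)]
      rfl
    have hmapW : ((r ++ [W]).map fun z' => if z' = W then b else z') = r ++ [b] := by
      rw [List.map_append, map_repl_eq r W b hW]
      simp
    have hmapx : ((r ++ [b, W]).map fun z' => if z' = W then x else z') = r ++ [b, x] := by
      rw [List.map_append, map_repl_eq r W x hW]
      simp [if_neg (by omega : ¬ b = W)]
    have s1 : rowInsert (r :: rest) W = (r ++ [W]) :: rest := by
      simp only [rowInsert, hrW]
    have s2 : rowInsert ((r ++ [W]) :: rest) b = (r ++ [b]) :: rowInsert rest W := by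
      simp only [rowInsert, e1, hmapW]
    have s3 : rowInsert ((r ++ [b]) :: rowInsert rest W) x
        = (r ++ [b] ++ [x]) :: rowInsert rest W := by
      simp only [rowInsert, e3]
    have t1 : rowInsert (r :: rest) b = (r ++ [b]) :: rest := by
      simp only [rowInsert, hrb]
    have t2 : rowInsert ((r ++ [b]) :: rest) W = (r ++ [b] ++ [W]) :: rest := by
      simp only [rowInsert, e2]
    have t3 : rowInsert ((r ++ [b] ++ [W]) :: rest) x
        = (r ++ [b, x]) :: rowInsert rest W := by
      have : r ++ [b] ++ [W] = r ++ [b, W] := by simp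
      rw [this]
      simp only [rowInsert, e4, hmapx]
    rw [s1, s2, s3, t1, t2, t3]
    simp

end Swap
section RSKSwap
open List

lemma rsk_swap (A S : List ℕ) (W b : ℕ)
    (hW : ∀ y ∈ (RSKList A).getD 0 [], y < W)
    (hor : (∃ y ∈ (RSKList A).getD 0 [], b < y) ∨
           ((∀ y ∈ (RSKList A).getD 0 [], y < b) ∧
             ∃ x S', S = x :: S' ∧ b < x ∧ x < W)) :
    RSKList (A ++ W :: b :: S) = RSKList (A ++ b :: W :: S) := by
  have hA : List.foldl rowInsert [] A = RSKList A := rfl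
  rcases hor with hex | ⟨hall, x, S', rfl, hbx, hxW⟩
  · simp only [RSKList, List.foldl_append, List.foldl_cons]
    rw [show List.foldl rowInsert [] A = RSKList A from rfl,
      swap_insert₁ (RSKList A) W b hW hex]
  · simp only [RSKList, List.foldl_append, List.foldl_cons]
    rw [show List.foldl rowInsert [] A = RSKList A from rfl,
      swap_insert₂ (RSKList A) W b x hW hall hbx hxW]
end RSKSwap

section PermLemmas

variable {n : ℕ}

lemma simpleTr_eq_swap (j : ℕ) (h : j + 1 < n) (p1 : j < n) :
    simpleTr j h = Equiv.swap (⟨j, p1⟩ : Fin n) ⟨j + 1, h⟩ := rfl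

lemma simpleTr_val (j : ℕ) (h : j + 1 < n) (p : Fin n) :
    ((simpleTr j h p : Fin n) : ℕ)
      = if (p : ℕ) = j then j + 1 else if (p : ℕ) = j + 1 then j else (p : ℕ) := by
  have hjn : j < n := by omega
  rw [simpleTr_eq_swap j h hjn]
  by_cases h1 : p = (⟨j, hjn⟩ : Fin n)
  · rw [h1, Equiv.swap_apply_left]
    simp
  · by_cases h2 : p = (⟨j + 1, h⟩ : Fin n)
    · rw [h2, Equiv.swap_apply_right]
      simp
    · rw [Equiv.swap_apply_of_ne_of_ne h1 h2]
      have e1 : (p : ℕ) ≠ j := fun hh => h1 (Fin.ext hh)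
      have e2 : (p : ℕ) ≠ j + 1 := fun hh => h2 (Fin.ext hh)
      rw [if_neg e1, if_neg e2]

lemma simpleTr_lt {j : ℕ} {h : j + 1 < n} {p q : Fin n} (hpq : p < q)
    (hne : ¬((p : ℕ) = j ∧ (q : ℕ) = j + 1)) :
    simpleTr j h p < simpleTr j h q := by
  have hpq' : (p : ℕ) < (q : ℕ) := hpq
  have hp := p.isLt
  have hq := q.isLt
  refine Fin.lt_def.mpr ?_
  rw [simpleTr_val j h p, simpleTr_val j h q]
  split_ifs <;> omega

lemma fc_mul (w : Equiv.Perm (Fin n)) (hfc : FullyCommutative w) (j : ℕ) (h : j + 1 < n)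
    (hdesc : w ⟨j + 1, h⟩ < w ⟨j, by omega⟩) :
    FullyCommutative (w * simpleTr j h) := by
  rintro ⟨a, b, c, hab, hbc, h1, h2⟩
  simp only [Equiv.Perm.mul_apply] at h1 h2
  have hjn : j < n := by omega
  set jf : Fin n := ⟨j, hjn⟩ with hjf
  set j1f : Fin n := ⟨j + 1, h⟩ with hj1f
  have hsl : simpleTr j h jf = j1f := by
    rw [simpleTr_eq_swap j h hjn]; exact Equiv.swap_apply_left _ _
  have hsr : simpleTr j h j1f = jf := by
    rw [simpleTr_eq_swap j h hjn]; exact Equiv.swap_apply_right _ _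
  by_cases hab' : (a : ℕ) = j ∧ (b : ℕ) = j + 1
  · have ha : a = jf := Fin.ext hab'.1
    have hb : b = j1f := Fin.ext hab'.2
    rw [ha, hb, hsl, hsr] at h2
    exact absurd h2 (not_lt.mpr (le_of_lt hdesc))
  · by_cases hbc' : (b : ℕ) = j ∧ (c : ℕ) = j + 1
    · have hb : b = jf := Fin.ext hbc'.1
      have hc : c = j1f := Fin.ext hbc'.2
      rw [hb, hc, hsl, hsr] at h1
      exact absurd h1 (not_lt.mpr (le_of_lt hdesc))
    · exact hfc ⟨simpleTr j h a, simpleTr j h b, simpleTr j h c,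
        simpleTr_lt hab hab', simpleTr_lt hbc hbc', h1, h2⟩

lemma invCount_mul (u : Equiv.Perm (Fin n)) (j : ℕ) (h : j + 1 < n)
    (asc : u ⟨j, by omega⟩ < u ⟨j + 1, h⟩) :
    invCount (u * simpleTr j h) = invCount u + 1 := by
  classical
  have hjn : j < n := by omega
  set jf : Fin n := ⟨j, hjn⟩ with hjf
  set j1f : Fin n := ⟨j + 1, h⟩ with hj1f
  set s : Equiv.Perm (Fin n) := simpleTr j h with hs
  have hsl : s jf = j1f := by
    rw [hs, simpleTr_eq_swap j h hjn]; exact Equiv.swap_apply_left _ _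
  have hsr : s j1f = jf := by
    rw [hs, simpleTr_eq_swap j h hjn]; exact Equiv.swap_apply_right _ _
  have hss : ∀ p : Fin n, s (s p) = p := by
    intro p
    rw [hs, simpleTr_eq_swap j h hjn]
    exact Equiv.swap_apply_self _ _ _
  have hmono : ∀ p q : Fin n, p < q → ¬((p : ℕ) = j ∧ (q : ℕ) = j + 1) → s p < s q :=
    fun p q hpq hne => simpleTr_lt hpq hne
  have key : (Finset.univ.filter fun p : Fin n × Fin n =>
      p.1 < p.2 ∧ (u * s) p.2 < (u * s) p.1) =
      insert (jf, j1f) ((Finset.univ.filter fun p : Fin n × Fin n =>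
        p.1 < p.2 ∧ u p.2 < u p.1).image fun p => (s p.1, s p.2)) := by
    ext ⟨p, q⟩
    rw [Finset.mem_filter, Finset.mem_insert, Finset.mem_image]
    simp only [Finset.mem_filter, Finset.mem_univ, true_and, Finset.mem_insert,
      Finset.mem_image, Equiv.Perm.mul_apply, Prod.mk.injEq, Prod.exists]
    constructor
    · rintro ⟨hpq, hlt⟩
      by_cases hc : (p : ℕ) = j ∧ (q : ℕ) = j + 1
      · exact Or.inl ⟨Fin.ext hc.1, Fin.ext hc.2⟩
      · exact Or.inr ⟨s p, s q, ⟨hmono p q hpq hc, hlt⟩, hss p, hss q⟩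
    · rintro (⟨rfl, rfl⟩ | ⟨a, c, ⟨hac, hca⟩, rfl, rfl⟩)
      · refine ⟨Fin.lt_def.mpr (Nat.lt_succ_self j), ?_⟩
        rw [hsr, hsl]
        exact asc
      · refine ⟨?_, by rwa [hss, hss]⟩
        refine hmono a c hac ?_
        rintro ⟨ha, hc⟩
        have ha' : a = jf := Fin.ext ha
        have hc' : c = j1f := Fin.ext hc
        rw [ha', hc'] at hca
        exact absurd hca (not_lt.mpr (le_of_lt asc))
  have hinj : Function.Injective (fun p : Fin n × Fin n => (s p.1, s p.2)) := by
    rintro ⟨a, b⟩ ⟨c, d⟩ hh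
    simp only [Prod.mk.injEq] at hh
    exact Prod.ext (s.injective hh.1) (s.injective hh.2)
  have hnotmem : (jf, j1f) ∉ ((Finset.univ.filter fun p : Fin n × Fin n =>
      p.1 < p.2 ∧ u p.2 < u p.1).image fun p => (s p.1, s p.2)) := by
    intro hmem
    simp only [Finset.mem_image, Finset.mem_filter, Finset.mem_univ, true_and,
      Prod.mk.injEq, Prod.exists] at hmem
    obtain ⟨a, c, ⟨hac, _⟩, ha, hc⟩ := hmem
    have ha' : a = j1f := by
      have h2 := congrArg s ha
      rwa [hss, hsl] at h2
    have hc' : c = jf := by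
      have h2 := congrArg s hc
      rwa [hss, hsr] at h2
    rw [ha', hc'] at hac
    have hv : j + 1 < j := Fin.lt_def.mp hac
    omega
  show (Finset.univ.filter fun p : Fin n × Fin n =>
      p.1 < p.2 ∧ (u * s) p.2 < (u * s) p.1).card = invCount u + 1
  rw [key, Finset.card_insert_of_notMem hnotmem,
    Finset.card_image_of_injective _ hinj]
  rfl

end PermLemmas
section Main

variable {n : ℕ}

/-- Generic one-line list facts -/
lemma oneLine_length (w : Equiv.Perm (Fin n)) : (oneLine w).length = n := by
  simp [oneLine]

lemma oneLine_getElem (w : Equiv.Perm (Fin n)) (k : ℕ) (hk : k < (oneLine w).length) :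
    (oneLine w)[k] = (w ⟨k, by simpa [oneLine] using hk⟩ : ℕ) := by
  simp only [oneLine, List.getElem_ofFn]

lemma oneLine_decomp (w : Equiv.Perm (Fin n)) (j : ℕ) (h : j + 1 < n) :
    oneLine w = (oneLine w).take j
      ++ (w ⟨j, by omega⟩ : ℕ) :: (w ⟨j + 1, h⟩ : ℕ) :: (oneLine w).drop (j + 2) := by
  have hlen := oneLine_length w
  have hjl : j < (oneLine w).length := by omega
  have hj1l : j + 1 < (oneLine w).length := by omega
  conv_lhs => rw [← List.take_append_drop j (oneLine w)]
  congr 1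
  rw [List.drop_eq_getElem_cons hjl, List.drop_eq_getElem_cons (l := oneLine w)
    (i := j + 1) (by omega), oneLine_getElem w j hjl, oneLine_getElem w (j+1) hj1l]

lemma mem_take_oneLine (w : Equiv.Perm (Fin n)) (j : ℕ) (y : ℕ)
    (hy : y ∈ (oneLine w).take j) :
    ∃ k, ∃ hk : k < n, k < j ∧ y = (w ⟨k, hk⟩ : ℕ) := by
  obtain ⟨i, hi, hget⟩ := List.mem_iff_getElem.mp hy
  have hlen : i < j ∧ i < n := by
    have := hi
    rw [List.length_take, oneLine_length] at this
    omega
  refine ⟨i, hlen.2, hlen.1, ?_⟩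
  rw [← hget, List.getElem_take, oneLine_getElem]

/-- The key step : a descent which admits a "certificate" can be sorted,
    preserving the RSK tableau, contradicting minimality. -/
lemma descent_contra (w : Equiv.Perm (Fin n)) (hmin : MinimalCrowded w)
    (j : ℕ) (h : j + 1 < n)
    (hdesc : (w ⟨j + 1, h⟩ : ℕ) < (w ⟨j, by omega⟩ : ℕ))
    (hcond : (∃ _hj : 1 ≤ j, (w ⟨j + 1, h⟩ : ℕ) < (w ⟨j - 1, by omega⟩ : ℕ)) ∨
             (∃ h2 : j + 2 < n, (w ⟨j + 1, h⟩ : ℕ) < (w ⟨j + 2, h2⟩ : ℕ) ∧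
                (w ⟨j + 2, h2⟩ : ℕ) < (w ⟨j, by omega⟩ : ℕ))) :
    False := by
  classical
  obtain ⟨hfc, hcrowd, hminimal⟩ := hmin
  have hjn : j < n := by omega
  set jf : Fin n := ⟨j, hjn⟩ with hjf
  set j1f : Fin n := ⟨j + 1, h⟩ with hj1f
  set W : ℕ := (w jf : ℕ) with hWdef
  set b : ℕ := (w j1f : ℕ) with hbdef
  set v : Equiv.Perm (Fin n) := w * simpleTr j h with hv
  -- LTR max property
  have hLTR : ∀ k (hk : k < n), k < j → (w ⟨k, hk⟩ : ℕ) < W := by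
    intro k hk hkj
    by_contra hcon
    have hne : (w ⟨k, hk⟩ : ℕ) ≠ W := by
      intro he
      have : (⟨k, hk⟩ : Fin n) = jf := w.injective (Fin.ext he)
      have : k = j := congrArg Fin.val this
      omega
    have hgt : W < (w ⟨k, hk⟩ : ℕ) := by omega
    exact hfc ⟨⟨k, hk⟩, jf, j1f, Fin.lt_def.mpr hkj, Fin.lt_def.mpr (Nat.lt_succ_self j),
      Fin.lt_def.mpr hdesc, Fin.lt_def.mpr hgt⟩
  -- decompositions
  have hl : oneLine w = (oneLine w).take j ++ W :: b :: (oneLine w).drop (j + 2) :=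
    oneLine_decomp w j h
  have hvtake : (oneLine v).take j = (oneLine w).take j := by
    refine List.ext_getElem (by simp [oneLine]) ?_
    intro i h1 h2
    rw [List.getElem_take, List.getElem_take]
    have hi : i < j := by
      have := h1
      simp only [List.length_take, oneLine_length] at this
      omega
    have hin : i < n := by omega
    rw [oneLine_getElem v i (by rw [oneLine_length]; omega),
      oneLine_getElem w i (by rw [oneLine_length]; omega)]
    have hfix : simpleTr j h (⟨i, hin⟩ : Fin n) = ⟨i, hin⟩ := by
      rw [simpleTr_eq_swap j h hjn]
      exact Equiv.swap_apply_of_ne_of_ne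
        (fun hh => by have : i = j := congrArg Fin.val hh; omega)
        (fun hh => by have : i = j + 1 := congrArg Fin.val hh; omega)
    show ((w (simpleTr j h ⟨i, hin⟩)) : ℕ) = _
    rw [hfix]
  have hvdrop : (oneLine v).drop (j + 2) = (oneLine w).drop (j + 2) := by
    refine List.ext_getElem (by simp [oneLine]) ?_
    intro i h1 h2
    rw [List.getElem_drop, List.getElem_drop]
    have hin : j + 2 + i < n := by
      have := h1
      simp only [List.length_drop, oneLine_length] at this
      omega
    rw [oneLine_getElem v _ (by rw [oneLine_length]; omega),
      oneLine_getElem w _ (by rw [oneLine_length]; omega)]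
    have hfix : simpleTr j h (⟨j + 2 + i, hin⟩ : Fin n) = ⟨j + 2 + i, hin⟩ := by
      rw [simpleTr_eq_swap j h hjn]
      exact Equiv.swap_apply_of_ne_of_ne
        (fun hh => by have : j + 2 + i = j := congrArg Fin.val hh; omega)
        (fun hh => by have : j + 2 + i = j + 1 := congrArg Fin.val hh; omega)
    show ((w (simpleTr j h ⟨j + 2 + i, hin⟩)) : ℕ) = _
    rw [hfix]
  have hvj : (v jf : ℕ) = b := by
    rw [hv]
    show ((w (simpleTr j h jf)) : ℕ) = b
    rw [show simpleTr j h jf = j1f from by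
      rw [simpleTr_eq_swap j h hjn]; exact Equiv.swap_apply_left _ _]
  have hvj1 : (v j1f : ℕ) = W := by
    rw [hv]
    show ((w (simpleTr j h j1f)) : ℕ) = W
    rw [show simpleTr j h j1f = jf from by
      rw [simpleTr_eq_swap j h hjn]; exact Equiv.swap_apply_right _ _]
  have hlv : oneLine v = (oneLine w).take j ++ b :: W :: (oneLine w).drop (j + 2) := by
    have hd2 := oneLine_decomp v j h
    have e1 : ((v ⟨j, hjn⟩ : Fin n) : ℕ) = b := hvj
    have e2 : ((v ⟨j + 1, h⟩ : Fin n) : ℕ) = W := hvj1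
    rw [hd2, hvtake, hvdrop, e1, e2]
  -- row1 of the prefix tableau is below W
  have hWrow : ∀ y ∈ (RSKList ((oneLine w).take j)).getD 0 [], y < W := by
    intro y hy
    obtain ⟨k, hk, hkj, rfl⟩ := mem_take_oneLine w j y
      (row1_RSKList_subset _ y hy)
    exact hLTR k hk hkj
  -- the certificate gives the hor hypothesis of rsk_swap
  have hor : (∃ y ∈ (RSKList ((oneLine w).take j)).getD 0 [], b < y) ∨
      ((∀ y ∈ (RSKList ((oneLine w).take j)).getD 0 [], y < b) ∧
        ∃ x S', (oneLine w).drop (j + 2) = x :: S' ∧ b < x ∧ x < W) := by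
    rcases hcond with ⟨hj1, hlt⟩ | ⟨h2, hx1, hx2⟩
    · left
      have hj1n : j - 1 < n := by omega
      have hmem : ((oneLine w)[j-1]'(by rw [oneLine_length]; omega))
          ∈ (RSKList ((oneLine w).take j)).getD 0 [] := by
        have hTake : (oneLine w).take j
            = (oneLine w).take (j - 1) ++ [(oneLine w)[j-1]'(by rw [oneLine_length]; omega)] := by
          conv_lhs => rw [show j = (j - 1) + 1 by omega]
          rw [List.take_succ,
            List.getElem?_eq_getElem (by rw [oneLine_length]; omega), Option.toList_some]
        rw [hTake, rskList_append]
        exact mem_row1_rowInsert _ _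
      refine ⟨_, hmem, ?_⟩
      rw [oneLine_getElem w (j-1) (by rw [oneLine_length]; omega)]
      exact hlt
    · by_cases hex : ∃ y ∈ (RSKList ((oneLine w).take j)).getD 0 [], b < y
      · exact Or.inl hex
      · right
        push_neg at hex
        constructor
        · intro y hy
          obtain ⟨k, hk, hkj, rfl⟩ := mem_take_oneLine w j y (row1_RSKList_subset _ y hy)
          have h1 : (w ⟨k, hk⟩ : ℕ) ≤ b := hex _ hy
          have h2' : (w ⟨k, hk⟩ : ℕ) ≠ b := by
            intro he
            have : (⟨k, hk⟩ : Fin n) = j1f := w.injective (Fin.ext he)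
            have : k = j + 1 := congrArg Fin.val this
            omega
          omega
        · refine ⟨(oneLine w)[j+2]'(by rw [oneLine_length]; omega),
            (oneLine w).drop (j + 3), ?_, ?_, ?_⟩
          · rw [List.drop_eq_getElem_cons (l := oneLine w) (i := j + 2)
              (by rw [oneLine_length]; omega)]
          · rw [oneLine_getElem w (j+2) (by rw [oneLine_length]; omega)]
            exact hx1
          · rw [oneLine_getElem w (j+2) (by rw [oneLine_length]; omega)]
            exact hx2
  -- equal RSK tableaux
  have hrsk : RSKP w = RSKP v := by
    rw [RSKP, RSKP, hl, hlv]
    exact rsk_swap _ _ W b hWrow hor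
  -- v is below w, fully commutative, crowded : contradiction
  have hfcv : FullyCommutative v := fc_mul w hfc j h (Fin.lt_def.mpr hdesc)
  have hvasc : v jf < v j1f := by
    refine Fin.lt_def.mpr ?_
    rw [hvj, hvj1]
    exact hdesc
  have hvs : v * simpleTr j h = w := by
    rw [hv, mul_assoc, simpleTr_eq_swap j h hjn, Equiv.swap_mul_self, mul_one]
  have hinv : invCount w = invCount v + 1 := by
    conv_lhs => rw [← hvs]
    exact invCount_mul v j h hvasc
  have hcov : RWCovers v w := ⟨j, h, hvs.symm, hinv⟩
  have hle : RightWeakLE v w := Relation.ReflTransGen.single hcov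
  have hnev : v ≠ w := by
    intro he
    rw [he] at hinv
    omega
  exact hminimal v hfcv hle hnev (by rw [CrowdedPerm, ← hrsk]; exact hcrowd)

end Main
section Final

variable {n : ℕ}

lemma fin_cast {m a b : ℕ} (ha : a < m) (hb : b < m) (hab : a = b) :
    (⟨a, ha⟩ : Fin m) = ⟨b, hb⟩ := by subst hab; rfl

lemma descent_lt (w : Equiv.Perm (Fin n)) {j : ℕ}
    (hj : entry w (j + 1) < entry w j) : j + 1 < n := by
  by_contra hcon
  push_neg at hcon
  rcases Nat.lt_or_ge j n with hjn | hjn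
  · have hj1 : ¬ (j + 1 < n) := by omega
    rw [entry, dif_neg hj1, entry, dif_pos hjn] at hj
    have := (w ⟨j, hjn⟩).isLt
    omega
  · have hj1 : ¬ (j + 1 < n) := by omega
    have hj2 : ¬ (j < n) := by omega
    rw [entry, dif_neg hj1, entry, dif_neg hj2] at hj
    omega

theorem minimal_crowded_fixed_points' (w : Equiv.Perm (Fin n))
    (hmin : MinimalCrowded w) (d d' : ℕ)
    (hd : IsLeast {j : ℕ | entry w (j + 1) < entry w j} d)
    (hd' : IsGreatest {j : ℕ | entry w (j + 1) < entry w j} d') :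
    ∀ i : ℕ, i < n → (i < d ∨ d' + 2 ≤ i) → entry w i = i := by
  have hdn : d + 1 < n := descent_lt w hd.1
  have hd'n : d' + 1 < n := descent_lt w hd'.1
  have hnodesc : ∀ j (hj : j + 1 < n),
      (w ⟨j + 1, hj⟩ : ℕ) < (w ⟨j, by omega⟩ : ℕ) → d ≤ j ∧ j ≤ d' := by
    intro j hj hlt
    have hmem : j ∈ {j : ℕ | entry w (j + 1) < entry w j} := by
      rw [Set.mem_setOf_eq, entry, dif_pos hj, entry, dif_pos (by omega : j < n)]
      exact hlt
    exact ⟨hd.2 hmem, hd'.2 hmem⟩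
  -- Part 1 : prefix is fixed
  have hpre : ∀ i (hid : i < d), (w ⟨i, by omega⟩ : ℕ) = i := by
    intro i
    induction i using Nat.strong_induction_on with
    | _ i IH =>
    intro hid
    have hin : i < n := by omega
    by_contra hne
    have hwi : i < (w ⟨i, hin⟩ : ℕ) := by
      rcases Nat.lt_trichotomy (w ⟨i, hin⟩ : ℕ) i with hlt | heq | hgt
      · exfalso
        have hmn : (w ⟨i, hin⟩ : ℕ) < n := (w ⟨i, hin⟩).isLt
        have h1 : (w ⟨(w ⟨i, hin⟩ : ℕ), by omega⟩ : ℕ) = (w ⟨i, hin⟩ : ℕ) :=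
          IH _ hlt (by omega)
        have h2 := w.injective (Fin.ext h1 :
          w ⟨(w ⟨i, hin⟩ : ℕ), by omega⟩ = w ⟨i, hin⟩)
        have h3 : (w ⟨i, hin⟩ : ℕ) = i := congrArg Fin.val h2
        omega
      · exact absurd heq hne
      · exact hgt
    -- position of value i
    have hpn : ((w.symm ⟨i, hin⟩ : Fin n) : ℕ) < n := (w.symm ⟨i, hin⟩).isLt
    set p : ℕ := ((w.symm ⟨i, hin⟩ : Fin n) : ℕ) with hp
    have hwp : (w ⟨p, hpn⟩ : ℕ) = i := by
      have h1 : (⟨p, hpn⟩ : Fin n) = w.symm ⟨i, hin⟩ := Fin.ext rfl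
      rw [h1, Equiv.apply_symm_apply]
    have hvalp : ∀ (k : ℕ) (hk : k < n), (w ⟨k, hk⟩ : ℕ) = i → k = p := by
      intro k hk hwk
      have h1 : w ⟨k, hk⟩ = w ⟨p, hpn⟩ := Fin.ext (by omega)
      exact congrArg Fin.val (w.injective h1)
    have hpi : i + 2 ≤ p := by
      have h1 : p ≠ i := by
        intro he
        apply hne
        rw [show (⟨i, hin⟩ : Fin n) = ⟨p, hpn⟩ from Fin.ext he.symm]
        exact hwp
      have h2 : ¬ p < i := by
        intro hlt
        have h3 : (w ⟨p, hpn⟩ : ℕ) = p := IH p hlt (by omega)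
        omega
      have h4 : p ≠ i + 1 := by
        intro he
        have h5 : i + 1 < n := by omega
        have h6 : (w ⟨i + 1, h5⟩ : ℕ) < (w ⟨i, by omega⟩ : ℕ) := by
          calc (w ⟨i + 1, h5⟩ : ℕ) = (w ⟨p, hpn⟩ : ℕ) :=
                congrArg Fin.val (congrArg w (fin_cast h5 hpn he.symm))
            _ = i := hwp
            _ < (w ⟨i, hin⟩ : ℕ) := hwi
        have := (hnodesc (i) h5 h6).1
        omega
      omega
    have hbig : ∀ k (hk : k < n), i ≤ k → k < p → i < (w ⟨k, hk⟩ : ℕ) := by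
      intro k hk h1 h2
      rcases Nat.lt_trichotomy (w ⟨k, hk⟩ : ℕ) i with hlt | heq | hgt
      · exfalso
        have hmn : (w ⟨k, hk⟩ : ℕ) < n := (w ⟨k, hk⟩).isLt
        have h3 : (w ⟨(w ⟨k, hk⟩ : ℕ), by omega⟩ : ℕ) = (w ⟨k, hk⟩ : ℕ) :=
          IH _ (by omega) (by omega)
        have h4 := w.injective (Fin.ext h3 :
          w ⟨(w ⟨k, hk⟩ : ℕ), by omega⟩ = w ⟨k, hk⟩)
        have h5 : (w ⟨k, hk⟩ : ℕ) = k := congrArg Fin.val h4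
        omega
      · exfalso
        have := hvalp k hk heq
        omega
      · exact hgt
    have hp1n : p - 1 + 1 < n := by omega
    refine descent_contra w hmin (p - 1) hp1n ?_ (Or.inl ⟨by omega, ?_⟩)
    · calc (w ⟨p - 1 + 1, hp1n⟩ : ℕ) = (w ⟨p, hpn⟩ : ℕ) :=
            congrArg Fin.val (congrArg w (fin_cast hp1n hpn (by omega)))
        _ = i := hwp
        _ < (w ⟨p - 1, by omega⟩ : ℕ) := hbig (p - 1) (by omega) (by omega) (by omega)
    · calc (w ⟨p - 1 + 1, hp1n⟩ : ℕ) = (w ⟨p, hpn⟩ : ℕ) :=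
            congrArg Fin.val (congrArg w (fin_cast hp1n hpn (by omega)))
        _ = i := hwp
        _ < (w ⟨p - 1 - 1, by omega⟩ : ℕ) :=
            hbig (p - 1 - 1) (by omega) (by omega) (by omega)
  -- Part 2 : suffix is fixed
  have hsuf : ∀ m i (hin : i < n), d' + 2 ≤ i → n ≤ i + m →
      (w ⟨i, hin⟩ : ℕ) = i := by
    intro m
    induction m with
    | zero => intro i hin _ hm; omega
    | succ m IH =>
      intro i hin hd2 hm
      by_contra hne
      have IH' : ∀ k (hk : k < n), i < k → (w ⟨k, hk⟩ : ℕ) = k := by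
        intro k hk hik
        exact IH k hk (by omega) (by omega)
      have ha : (w ⟨i, hin⟩ : ℕ) < i := by
        rcases Nat.lt_trichotomy (w ⟨i, hin⟩ : ℕ) i with hlt | heq | hgt
        · exact hlt
        · exact absurd heq hne
        · exfalso
          have hmn : (w ⟨i, hin⟩ : ℕ) < n := (w ⟨i, hin⟩).isLt
          have h1 : (w ⟨(w ⟨i, hin⟩ : ℕ), hmn⟩ : ℕ) = (w ⟨i, hin⟩ : ℕ) :=
            IH' _ hmn hgt
          have h2 := w.injective (Fin.ext h1 :
            w ⟨(w ⟨i, hin⟩ : ℕ), hmn⟩ = w ⟨i, hin⟩)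
          have h3 : (w ⟨i, hin⟩ : ℕ) = i := congrArg Fin.val h2
          omega
      have hqn : ((w.symm ⟨i, hin⟩ : Fin n) : ℕ) < n := (w.symm ⟨i, hin⟩).isLt
      set q : ℕ := ((w.symm ⟨i, hin⟩ : Fin n) : ℕ) with hqdef
      have hwq : (w ⟨q, hqn⟩ : ℕ) = i := by
        have h1 : (⟨q, hqn⟩ : Fin n) = w.symm ⟨i, hin⟩ := Fin.ext rfl
        rw [h1, Equiv.apply_symm_apply]
      have hqi : q < i := by
        have h1 : q ≠ i := by
          intro he
          apply hne
          rw [show (⟨i, hin⟩ : Fin n) = ⟨q, hqn⟩ from Fin.ext he.symm]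
          exact hwq
        have h2 : ¬ i < q := by
          intro hlt
          have := IH' q hqn hlt
          omega
        omega
      have hsmall : ∀ k (hk : k < n), k ≤ i → k ≠ q → (w ⟨k, hk⟩ : ℕ) < i := by
        intro k hk h1 h2
        rcases Nat.lt_trichotomy (w ⟨k, hk⟩ : ℕ) i with hlt | heq | hgt
        · exact hlt
        · exfalso
          have h3 : w ⟨k, hk⟩ = w ⟨q, hqn⟩ := Fin.ext (by omega)
          have h4 : k = q := congrArg Fin.val (w.injective h3)
          exact h2 h4
        · exfalso
          have hmn : (w ⟨k, hk⟩ : ℕ) < n := (w ⟨k, hk⟩).isLt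
          have h3 : (w ⟨(w ⟨k, hk⟩ : ℕ), hmn⟩ : ℕ) = (w ⟨k, hk⟩ : ℕ) :=
            IH' _ hmn hgt
          have h4 := w.injective (Fin.ext h3 :
            w ⟨(w ⟨k, hk⟩ : ℕ), hmn⟩ = w ⟨k, hk⟩)
          have h5 : (w ⟨k, hk⟩ : ℕ) = k := congrArg Fin.val h4
          omega
      have hq1n : q + 1 < n := by omega
      have hwq1 : (w ⟨q + 1, hq1n⟩ : ℕ) < i := hsmall (q + 1) hq1n (by omega) (by omega)
      have hdq : (w ⟨q + 1, hq1n⟩ : ℕ) < (w ⟨q, by omega⟩ : ℕ) := by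
        exact lt_of_lt_of_eq hwq1 hwq.symm
      have hqd' : q ≤ d' := (hnodesc q hq1n hdq).2
      have hq2n : q + 2 < n := by omega
      have hwq2 : (w ⟨q + 2, hq2n⟩ : ℕ) < i := hsmall (q + 2) hq2n (by omega) (by omega)
      rcases Nat.lt_trichotomy (w ⟨q + 1, hq1n⟩ : ℕ) (w ⟨q + 2, hq2n⟩ : ℕ)
        with hc | hc | hc
      · refine descent_contra w hmin q hq1n hdq (Or.inr ⟨hq2n, hc, ?_⟩)
        exact lt_of_lt_of_eq hwq2 hwq.symm
      · exfalso
        have h3 : w ⟨q + 1, hq1n⟩ = w ⟨q + 2, hq2n⟩ := Fin.ext hc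
        have h4 : q + 1 = q + 2 := congrArg Fin.val (w.injective h3)
        omega
      · refine descent_contra w hmin (q + 1) hq2n hc (Or.inl ⟨by omega, ?_⟩)
        exact lt_of_lt_of_eq hwq2 hwq.symm
  intro i hin hcase
  rw [entry, dif_pos hin]
  rcases hcase with hlt | hge
  · exact hpre i hlt
  · exact hsuf n i hin hge (by omega)

end Final
/-- **Corollary.** A minimal crowded permutation with first descent `d` and last
descent `d'` fixes every position outside `[d, d'+1]` (0-indexed: every `i < d`
and every `i ≥ d'+2`). -/
theorem minimal_crowded_fixed_points {n : ℕ} (w : Equiv.Perm (Fin n))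
    (hmin : MinimalCrowded w) (d d' : ℕ)
    (hd : IsLeast {j : ℕ | entry w (j + 1) < entry w j} d)
    (hd' : IsGreatest {j : ℕ | entry w (j + 1) < entry w j} d') :
    ∀ i : ℕ, i < n → (i < d ∨ d' + 2 ≤ i) → entry w i = i :=
  minimal_crowded_fixed_points' w hmin d d' hd hd'
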